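/- arXiv:1406.2626 — 5 statements merged into one kernel-verified Lean document; each statement's English description precedes it below -/
import Mathlib

section
/- Let L > 0, m ∈ ℕ, and let g : AddCircle L → ℂ be continuously differentiable with ĝ(k) = 0 for every integer k with |k| ≤ m. Then ‖g‖ ≤ (L/(2π(m+1))) ‖g_x‖. -/
open MeasureTheory Finset

/-- The `L²` norm `(∫₀^L ‖g x‖² dx)^{1/2}` of a function on the circle `AddCircle L`
(recall that the standard measure on `AddCircle L` has total mass `L`). -/
noncomputable def l2norm (L : ℝ) [Fact (0 < L)] (g : AddCircle L → ℂ) : ℝ :=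
  Real.sqrt (∫ x : AddCircle L, ‖g x‖ ^ 2)

/-- The trigonometric polynomial `x ↦ ∑_{|k| ≤ N} c k · e^{2πikx/L}` on `AddCircle L`. -/
noncomputable def trigSum (L : ℝ) (N : ℕ) (c : ℤ → ℂ) : AddCircle L → ℂ :=
  fun x => ∑ k ∈ Finset.Icc (-(N : ℤ)) (N : ℤ), c k * fourier k x

/-- The low-mode Fourier projection `P_N g = ∑_{|k| ≤ N} ĝ(k) e^{2πikx/L}`. -/
noncomputable def lowProj (L : ℝ) [Fact (0 < L)] (N : ℕ) (g : AddCircle L → ℂ) :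
    AddCircle L → ℂ :=
  trigSum L N (fun k => fourierCoeff g k)

open Complex in
private lemma coeff_rel (L : ℝ) [Fact (0 < L)] (g g' : AddCircle L → ℂ)
    (hderiv : ∀ t : ℝ, HasDerivAt (fun τ : ℝ => g (τ : AddCircle L)) (g' (t : AddCircle L)) t)
    (hcont : Continuous g') (n : ℤ) (hn : n ≠ 0) :
    fourierCoeff g n = L / (2 * Real.pi * I * n) * fourierCoeff g' n := by
  have hL : (0:ℝ) < L := Fact.out
  have hab : (0:ℝ) < 0 + L := by linarith
  have hlift : ∀ h : AddCircle L → ℂ, AddCircle.liftIco L 0 (fun τ : ℝ => h τ) = h := by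
    intro h; funext z
    have hz : ((AddCircle.equivIco L 0 z : ℝ) : AddCircle L) = z :=
      (AddCircle.equivIco L 0).symm_apply_apply z
    simpa [AddCircle.liftIco, Function.comp, Set.restrict] using congrArg h hz
  have h1 : fourierCoeff g n = fourierCoeffOn hab (fun τ : ℝ => g τ) n := by
    rw [← fourierCoeff_liftIco_eq (fun τ : ℝ => g τ) n, hlift]
  have h2 : fourierCoeff g' n = fourierCoeffOn hab (fun τ : ℝ => g' τ) n := by
    rw [← fourierCoeff_liftIco_eq (fun τ : ℝ => g' τ) n, hlift]
  have h3 := fourierCoeffOn_of_hasDerivAt hab hn (f := fun τ : ℝ => g τ)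
    (f' := fun τ : ℝ => g' τ) (fun x _ => hderiv x)
    ((hcont.comp (AddCircle.continuous_mk' L)).intervalIntegrable 0 (0 + L))
  simp only [zero_add] at h1 h2 h3
  rw [(AddCircle.coe_period (p := L) : ((L:ℝ) : AddCircle L) = ((0:ℝ):AddCircle L))] at h3
  simp only [QuotientAddGroup.mk_zero, sub_self, mul_zero, zero_sub] at h3
  rw [h1, h2, h3]
  push_cast
  have h2pi : (2 * Real.pi * I * n : ℂ) ≠ 0 := by
    simp [Real.pi_ne_zero, hn, I_ne_zero]
  field_simp
  ring

private lemma parseval_aux (L : ℝ) [Fact (0 < L)] (f : AddCircle L → ℂ) (hf : Continuous f) :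
    Summable (fun n : ℤ => ‖fourierCoeff f n‖ ^ 2) ∧
    ∫ t : AddCircle L, ‖f t‖ ^ 2 ∂(AddCircle.haarAddCircle) =
      ∑' n : ℤ, ‖fourierCoeff f n‖ ^ 2 := by
  set F : Lp ℂ 2 (AddCircle.haarAddCircle (T := L)) :=
    ContinuousMap.toLp (E := ℂ) 2 AddCircle.haarAddCircle ℂ ⟨f, hf⟩
  have hae : (F : AddCircle L → ℂ) =ᵐ[AddCircle.haarAddCircle] f :=
    ContinuousMap.coeFn_toLp (p := 2) (μ := AddCircle.haarAddCircle) (𝕜 := ℂ) ⟨f, hf⟩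
  have hcoeff : ∀ n : ℤ, fourierCoeff (F : AddCircle L → ℂ) n = fourierCoeff f n :=
    fun n => fourierCoeff_toLp ⟨f, hf⟩ n
  constructor
  · have : Summable (fun n : ℤ => ‖fourierBasis.repr F n‖ ^ (2:ENNReal).toReal) :=
      (lp.memℓp (fourierBasis.repr F)).summable (by norm_num)
    simp only [fourierBasis_repr, hcoeff] at this
    simpa using this
  · have := tsum_sq_fourierCoeff F
    simp only [hcoeff] at this
    rw [this]
    refine integral_congr_ae (hae.mono fun x hx => ?_)
    dsimp only
    rw [hx]

/-- high-mode Poincaré inequality: if `g : AddCircle L → ℂ` is continuously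
differentiable with vanishing Fourier coefficients `ĝ(k) = 0` for all `|k| ≤ m`, then
`‖g‖ ≤ (L / (2π(m+1))) ‖g_x‖`. -/
theorem highModes_poincare (L : ℝ) [Fact (0 < L)] (m : ℕ) (g g' : AddCircle L → ℂ)
    (hderiv : ∀ t : ℝ, HasDerivAt (fun τ : ℝ => g (τ : AddCircle L)) (g' (t : AddCircle L)) t)
    (hcont : Continuous g')
    (hlow : ∀ k : ℤ, |k| ≤ (m : ℤ) → fourierCoeff g k = 0) :
    l2norm L g ≤ L / (2 * Real.pi * ((m : ℝ) + 1)) * l2norm L g' := by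
  have hL : (0:ℝ) < L := Fact.out
  have hpi := Real.pi_pos
  set C : ℝ := L / (2 * Real.pi * ((m : ℝ) + 1)) with hC
  have hCpos : 0 < C := by positivity
  -- continuity of g
  have hgR : Continuous fun τ : ℝ => g (τ : AddCircle L) :=
    continuous_iff_continuousAt.2 fun t => (hderiv t).continuousAt
  have hgcont : Continuous g := by
    have hlift : AddCircle.liftIco L 0 (fun τ : ℝ => g τ) = g := by
      funext z
      have hz : ((AddCircle.equivIco L 0 z : ℝ) : AddCircle L) = z :=
        (AddCircle.equivIco L 0).symm_apply_apply z
      simpa [AddCircle.liftIco, Function.comp, Set.restrict] using congrArg g hz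
    rw [← hlift]
    refine AddCircle.liftIco_zero_continuous ?_ hgR.continuousOn
    simp [AddCircle.coe_period (p := L)]
  obtain ⟨hsum_g, hint_g⟩ := parseval_aux L g hgcont
  obtain ⟨hsum_g', hint_g'⟩ := parseval_aux L g' hcont
  -- termwise bound
  have hterm : ∀ n : ℤ, ‖fourierCoeff g n‖ ^ 2 ≤ C ^ 2 * ‖fourierCoeff g' n‖ ^ 2 := by
    intro n
    rcases le_or_gt |n| (m : ℤ) with h | h
    · rw [hlow n h]; simp; positivity
    · have hn : n ≠ 0 := by
        intro h0; rw [h0] at h; simp at h; omega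
      have hrel := coeff_rel L g g' hderiv hcont n hn
      have hnorm : ‖fourierCoeff g n‖ = L / (2 * Real.pi * |(n:ℝ)|) * ‖fourierCoeff g' n‖ := by
        rw [hrel, norm_mul, norm_div, Complex.norm_real, Real.norm_eq_abs, _root_.abs_of_pos hL]
        congr 2
        simp [norm_mul, Complex.norm_real, Complex.norm_I, Real.norm_eq_abs,
          _root_.abs_of_pos hpi]
      have hnabs : ((m:ℝ) + 1) ≤ |(n:ℝ)| := by
        have : (m : ℤ) + 1 ≤ |n| := h
        exact_mod_cast (by exact_mod_cast this : ((m:ℤ)+1 : ℝ) ≤ (|n| : ℤ))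
      have hnpos : (0:ℝ) < |(n:ℝ)| := by positivity
      have hb : ‖fourierCoeff g n‖ ≤ C * ‖fourierCoeff g' n‖ := by
        rw [hnorm, hC]
        gcongr
      calc ‖fourierCoeff g n‖ ^ 2 ≤ (C * ‖fourierCoeff g' n‖) ^ 2 := by
            exact pow_le_pow_left₀ (norm_nonneg _) hb 2
        _ = C ^ 2 * ‖fourierCoeff g' n‖ ^ 2 := by ring
  -- sum bound
  have hsum_le : ∑' n : ℤ, ‖fourierCoeff g n‖ ^ 2 ≤
      C ^ 2 * ∑' n : ℤ, ‖fourierCoeff g' n‖ ^ 2 := by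
    rw [← tsum_mul_left]
    exact Summable.tsum_le_tsum hterm hsum_g (hsum_g'.mul_left _)
  -- translate to volume integrals
  have hvol : ∀ f : AddCircle L → ℂ,
      (∫ x : AddCircle L, ‖f x‖ ^ 2) =
        L * ∫ t : AddCircle L, ‖f t‖ ^ 2 ∂(AddCircle.haarAddCircle) := by
    intro f
    rw [AddCircle.volume_eq_smul_haarAddCircle, integral_smul_measure,
      ENNReal.toReal_ofReal hL.le, smul_eq_mul]
  have key : (∫ x : AddCircle L, ‖g x‖ ^ 2) ≤ C ^ 2 * ∫ x : AddCircle L, ‖g' x‖ ^ 2 := by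
    rw [hvol g, hvol g', hint_g, hint_g']
    calc L * ∑' n : ℤ, ‖fourierCoeff g n‖ ^ 2
        ≤ L * (C ^ 2 * ∑' n : ℤ, ‖fourierCoeff g' n‖ ^ 2) :=
          mul_le_mul_of_nonneg_left hsum_le hL.le
      _ = C ^ 2 * (L * ∑' n : ℤ, ‖fourierCoeff g' n‖ ^ 2) := by ring
  unfold l2norm
  calc Real.sqrt (∫ x : AddCircle L, ‖g x‖ ^ 2)
      ≤ Real.sqrt (C ^ 2 * ∫ x : AddCircle L, ‖g' x‖ ^ 2) := Real.sqrt_le_sqrt key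
    _ = C * Real.sqrt (∫ x : AddCircle L, ‖g' x‖ ^ 2) := by
        rw [Real.sqrt_mul (by positivity), Real.sqrt_sq hCpos.le]
end

section
/- There is a constant c > 0 depending only on L such that every continuously differentiable g : AddCircle L → ℂ satisfies ‖g‖_∞² ≤ c ‖g‖ ‖g‖_{H¹} (Agmon's inequality in one dimension). -/
open MeasureTheory Finset

/-- Agmon's inequality in one dimension: there is `c > 0` depending only on
`L` such that every continuously differentiable `g : AddCircle L → ℂ` satisfies
`‖g‖_∞² ≤ c ‖g‖ ‖g‖_{H¹}` where `‖g‖_{H¹}² = ‖g‖² + ‖g_x‖²`. -/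
theorem agmon_inequality (L : ℝ) [Fact (0 < L)] :
    ∃ c : ℝ, 0 < c ∧ ∀ (g g' : AddCircle L → ℂ),
      (∀ t : ℝ, HasDerivAt (fun τ : ℝ => g (τ : AddCircle L)) (g' (t : AddCircle L)) t) →
      Continuous g' →
      (⨆ x : AddCircle L, ‖g x‖) ^ 2
        ≤ c * l2norm L g * Real.sqrt ((l2norm L g) ^ 2 + (l2norm L g') ^ 2) := by
  have hL : 0 < L := Fact.out
  refine ⟨2 + 1 / L, by positivity, fun g g' hd hg' => ?_⟩
  set f : ℝ → ℂ := fun t => g (t : AddCircle L) with hf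
  set f' : ℝ → ℂ := fun t => g' (t : AddCircle L) with hf'
  have hfc : Continuous f := continuous_iff_continuousAt.mpr fun t => (hd t).continuousAt
  have hf'c : Continuous f' := hg'.comp continuous_quotient_mk'
  set G : ℝ → ℝ := fun t => ‖f t‖ ^ 2 with hG
  have hGc : Continuous G := hfc.norm.pow 2
  set D : ℝ → ℝ := fun t => 2 * (inner ℝ (f t) (f' t) : ℝ) with hD
  have hDc : Continuous D := continuous_const.mul (hfc.inner hf'c)
  have hGd : ∀ t, HasDerivAt G (D t) t := fun t => (hd t).norm_sq
  have hDle : ∀ t, |D t| ≤ 2 * (‖f t‖ * ‖f' t‖) := fun t => by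
    rw [hD, abs_mul, abs_two]
    exact mul_le_mul_of_nonneg_left (abs_real_inner_le_norm _ _) (by norm_num)
  set A := l2norm L g with hA
  set B := l2norm L g' with hB
  have hA0 : 0 ≤ A := Real.sqrt_nonneg _
  have hB0 : 0 ≤ B := Real.sqrt_nonneg _
  -- translation of the two L² norms to integrals over (0, L]
  have hIg : ∫ s in Set.Ioc (0:ℝ) L, ‖f s‖ ^ 2 = ∫ x : AddCircle L, ‖g x‖ ^ 2 := by
    have := AddCircle.integral_preimage L 0 (fun x => ‖g x‖ ^ 2)
    rwa [zero_add] at this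
  have hIg' : ∫ s in Set.Ioc (0:ℝ) L, ‖f' s‖ ^ 2 = ∫ x : AddCircle L, ‖g' x‖ ^ 2 := by
    have := AddCircle.integral_preimage L 0 (fun x => ‖g' x‖ ^ 2)
    rwa [zero_add] at this
  have hA2 : A ^ 2 = ∫ t in (0:ℝ)..L, G t := by
    rw [hA, l2norm, Real.sq_sqrt (integral_nonneg fun x => sq_nonneg _), ← hIg,
      intervalIntegral.integral_of_le hL.le]
  have hB2 : B ^ 2 = ∫ t in (0:ℝ)..L, ‖f' t‖ ^ 2 := by
    rw [hB, l2norm, Real.sq_sqrt (integral_nonneg fun x => sq_nonneg _), ← hIg',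
      intervalIntegral.integral_of_le hL.le]
  -- Cauchy-Schwarz
  have CS : ∫ s in (0:ℝ)..L, ‖f s‖ * ‖f' s‖ ≤ A * B := by
    haveI hfin : IsFiniteMeasure (volume.restrict (Set.Ioc (0:ℝ) L)) := by
      constructor
      rw [Measure.restrict_apply_univ, Real.volume_Ioc]
      exact ENNReal.ofReal_lt_top
    have hconj : (2:ℝ).HolderConjugate 2 := Real.HolderConjugate.two_two
    obtain ⟨u, _, hu⟩ := isCompact_Icc.exists_isMaxOn (Set.nonempty_Icc.mpr hL.le)
      (hfc.norm.continuousOn (s := Set.Icc 0 L))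
    obtain ⟨v, _, hv⟩ := isCompact_Icc.exists_isMaxOn (Set.nonempty_Icc.mpr hL.le)
      (hf'c.norm.continuousOn (s := Set.Icc 0 L))
    have hmg : MemLp (fun s => ‖f s‖) (ENNReal.ofReal 2) (volume.restrict (Set.Ioc 0 L)) :=
      MemLp.of_bound hfc.norm.aestronglyMeasurable (‖f u‖)
        ((ae_restrict_iff' measurableSet_Ioc).mpr (ae_of_all _ fun s hs => by
          rw [Real.norm_eq_abs, abs_of_nonneg (norm_nonneg _)]
          exact isMaxOn_iff.mp hu s ⟨hs.1.le, hs.2⟩))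
    have hmg' : MemLp (fun s => ‖f' s‖) (ENNReal.ofReal 2) (volume.restrict (Set.Ioc 0 L)) :=
      MemLp.of_bound hf'c.norm.aestronglyMeasurable (‖f' v‖)
        ((ae_restrict_iff' measurableSet_Ioc).mpr (ae_of_all _ fun s hs => by
          rw [Real.norm_eq_abs, abs_of_nonneg (norm_nonneg _)]
          exact isMaxOn_iff.mp hv s ⟨hs.1.le, hs.2⟩))
    have key := integral_mul_le_Lp_mul_Lq_of_nonneg hconj
      (ae_of_all _ fun s => norm_nonneg (f s)) (ae_of_all _ fun s => norm_nonneg (f' s)) hmg hmg'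
    rw [intervalIntegral.integral_of_le hL.le]
    refine key.trans (le_of_eq ?_)
    have h2 : ∀ x : ℝ, x ^ (2:ℝ) = x ^ 2 := fun x => by
      rw [show (2:ℝ) = ((2:ℕ):ℝ) by norm_num, Real.rpow_natCast]
    simp_rw [h2]
    rw [hIg, hIg', hA, hB, l2norm, l2norm, Real.sqrt_eq_rpow, Real.sqrt_eq_rpow]
  -- minimum of G on [0, L]
  obtain ⟨y, hy, hymin⟩ := isCompact_Icc.exists_isMinOn (Set.nonempty_Icc.mpr hL.le)
    (hGc.continuousOn (s := Set.Icc 0 L))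
  have hmean : G y ≤ 1 / L * A ^ 2 := by
    have h1 : (L - 0) • G y ≤ ∫ t in (0:ℝ)..L, G t := by
      rw [← intervalIntegral.integral_const]
      exact intervalIntegral.integral_mono_on hL.le intervalIntegrable_const
        (hGc.intervalIntegrable 0 L) (fun z hz => isMinOn_iff.mp hymin z hz)
    rw [smul_eq_mul, sub_zero, ← hA2] at h1
    rw [div_mul_eq_mul_div, one_mul, le_div_iff₀ hL]
    linarith [h1]
  -- the key pointwise bound
  have key : ∀ t ∈ Set.Icc (0:ℝ) L, G t ≤ 1 / L * A ^ 2 + 2 * (A * B) := by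
    intro t ht
    have hftc : G t - G y = ∫ s in y..t, D s :=
      (intervalIntegral.integral_eq_sub_of_hasDerivAt (fun s _ => hGd s)
        (hDc.intervalIntegrable _ _)).symm
    have habs : ∫ s in y..t, D s ≤ ∫ s in (0:ℝ)..L, |D s| := by
      rcases le_total y t with h | h
      · calc ∫ s in y..t, D s ≤ ∫ s in y..t, |D s| :=
              intervalIntegral.integral_mono_on h (hDc.intervalIntegrable _ _)
                (hDc.abs.intervalIntegrable _ _) (fun s _ => le_abs_self _)
          _ ≤ ∫ s in (0:ℝ)..L, |D s| :=
              intervalIntegral.integral_mono_interval hy.1 h ht.2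
                (Filter.Eventually.of_forall fun s => abs_nonneg _)
                (hDc.abs.intervalIntegrable _ _)
      · have hsymm : ∫ s in y..t, D s = - ∫ s in t..y, D s :=
          (intervalIntegral.integral_symm _ _)
        rw [hsymm]
        calc - ∫ s in t..y, D s = ∫ s in t..y, -D s := by
              rw [intervalIntegral.integral_neg]
          _ ≤ ∫ s in t..y, |D s| :=
              intervalIntegral.integral_mono_on h ((hDc.neg).intervalIntegrable _ _)
                (hDc.abs.intervalIntegrable _ _) (fun s _ => neg_le_abs _)
          _ ≤ ∫ s in (0:ℝ)..L, |D s| :=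
              intervalIntegral.integral_mono_interval ht.1 h hy.2
                (Filter.Eventually.of_forall fun s => abs_nonneg _)
                (hDc.abs.intervalIntegrable _ _)
    have hDbound : ∫ s in (0:ℝ)..L, |D s| ≤ 2 * (A * B) := by
      calc ∫ s in (0:ℝ)..L, |D s| ≤ ∫ s in (0:ℝ)..L, 2 * (‖f s‖ * ‖f' s‖) :=
            intervalIntegral.integral_mono_on hL.le (hDc.abs.intervalIntegrable _ _)
              ((continuous_const.mul (hfc.norm.mul hf'c.norm)).intervalIntegrable _ _)
              (fun s _ => hDle s)
        _ = 2 * ∫ s in (0:ℝ)..L, ‖f s‖ * ‖f' s‖ := intervalIntegral.integral_const_mul _ _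
        _ ≤ 2 * (A * B) := by linarith [CS]
    linarith [hftc, habs, hDbound, hmean]
  -- conclude via the sup
  set Q := 1 / L * A ^ 2 + 2 * (A * B) with hQ
  have hQ0 : 0 ≤ Q := by positivity
  have hsup : (⨆ x : AddCircle L, ‖g x‖) ≤ Real.sqrt Q := by
    refine ciSup_le fun x => ?_
    obtain ⟨t, ht, rfl⟩ := AddCircle.eq_coe_Ico x
    exact (Real.le_sqrt (norm_nonneg _) hQ0).mpr (key t ⟨ht.1, ht.2.le⟩)
  have h0 : 0 ≤ ⨆ x : AddCircle L, ‖g x‖ := Real.iSup_nonneg fun x => norm_nonneg _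
  have hS : A ≤ Real.sqrt (A ^ 2 + B ^ 2) :=
    (Real.le_sqrt hA0 (by positivity)).mpr (by nlinarith [sq_nonneg B])
  have hS' : B ≤ Real.sqrt (A ^ 2 + B ^ 2) :=
    (Real.le_sqrt hB0 (by positivity)).mpr (by nlinarith [sq_nonneg A])
  have hSn : 0 ≤ Real.sqrt (A ^ 2 + B ^ 2) := Real.sqrt_nonneg _
  calc (⨆ x : AddCircle L, ‖g x‖) ^ 2 ≤ Real.sqrt Q ^ 2 := by
        exact pow_le_pow_left₀ h0 hsup 2
    _ = Q := Real.sq_sqrt hQ0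
    _ ≤ (2 + 1 / L) * A * Real.sqrt (A ^ 2 + B ^ 2) := by
        have h1 : A * A ≤ A * Real.sqrt (A ^ 2 + B ^ 2) := mul_le_mul_of_nonneg_left hS hA0
        have h2 : A * B ≤ A * Real.sqrt (A ^ 2 + B ^ 2) := mul_le_mul_of_nonneg_left hS' hA0
        have hL' : 0 < 1 / L := by positivity
        rw [hQ]
        nlinarith [sq_nonneg A, mul_le_mul_of_nonneg_left h1 hL'.le]
end

section
/- Let w be a Galerkin solution. Then for every s ≥ −k₀, (1/2)(d/ds)‖w(s,·)‖² + γ‖w(s,·)‖² + μ‖P_m w(s,·)‖² = Im ∫₀^L f(x)·conj(w(s,x)) dx + μ Re ∫₀^L v(s)(x)·conj((P_m w(s,·))(x)) dx. -/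
open MeasureTheory Finset

section AuxLemmas

open AddCircle

variable {L : ℝ} [hL : Fact (0 < L)]

lemma integral_fourier_haar (k : ℤ) :
    ∫ x : AddCircle L, fourier k x ∂haarAddCircle = if k = 0 then 1 else 0 := by
  split_ifs with h
  · subst h; simp [fourier_zero]
  · exact integral_eq_zero_of_add_right_eq_neg (fourier_add_half_inv_index h hL.elim)

lemma cint {μ : Measure (AddCircle L)} [IsFiniteMeasureOnCompacts μ]
    (f : AddCircle L → ℂ) (hf : Continuous f) : Integrable f μ :=
  hf.integrable_of_hasCompactSupport (HasCompactSupport.of_compactSpace f)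

lemma trigSum_continuous (N : ℕ) (c : ℤ → ℂ) : Continuous (trigSum L N c) :=
  continuous_finset_sum _ fun k _ => continuous_const.mul (map_continuous (fourier k))

lemma fourierCoeff_trigSum (N : ℕ) (c : ℤ → ℂ) (j : ℤ) :
    fourierCoeff (trigSum L N c) j = if j ∈ Finset.Icc (-(N : ℤ)) (N : ℤ) then c j else 0 := by
  unfold trigSum
  rw [fourierCoeff]
  have : ∀ x : AddCircle L, (fourier (-j) x : ℂ) • ∑ k ∈ Finset.Icc (-(N : ℤ)) (N : ℤ), c k * fourier k x
      = ∑ k ∈ Finset.Icc (-(N : ℤ)) (N : ℤ), c k * ((fourier (-j) x : ℂ) * fourier k x) := by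
    intro x
    rw [smul_eq_mul, Finset.mul_sum]
    exact Finset.sum_congr rfl fun k _ => by ring
  simp_rw [this]
  rw [integral_finset_sum _ (f := fun k t => c k * ((fourier (-j)) t * (fourier k) t))
    (fun k _ => (cint _
    ((map_continuous (fourier (-j))).mul (map_continuous (fourier k)))).const_mul (c k))]
  simp_rw [← fourier_add, integral_const_mul, integral_fourier_haar, neg_add_eq_zero]
  simp [mul_ite]

lemma integral_volume_eq_smul (g : AddCircle L → ℂ) :
    ∫ x : AddCircle L, g x = L * ∫ x : AddCircle L, g x ∂haarAddCircle := by
  rw [volume_eq_smul_haarAddCircle, integral_smul_measure, ENNReal.toReal_ofReal hL.out.le]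
  simp [Complex.real_smul]

lemma pairing (g : AddCircle L → ℂ) (hg : Integrable g volume) (N : ℕ) (c : ℤ → ℂ) :
    ∫ x : AddCircle L, g x * (starRingEnd ℂ) (trigSum L N c x)
      = L * ∑ k ∈ Finset.Icc (-(N : ℤ)) (N : ℤ), (starRingEnd ℂ) (c k) * fourierCoeff g k := by
  have hgh : Integrable g haarAddCircle := by
    rw [volume_eq_smul_haarAddCircle] at hg
    exact (integrable_smul_measure (by simp [hL.out, hL.out.ne'])
      (by simp [hL.out, hL.out.ne'])).mp hg
  have key : ∀ x : AddCircle L, g x * (starRingEnd ℂ) (trigSum L N c x)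
      = ∑ k ∈ Finset.Icc (-(N : ℤ)) (N : ℤ),
          (starRingEnd ℂ) (c k) * ((fourier (-k) x : ℂ) * g x) := by
    intro x
    unfold trigSum
    rw [map_sum, Finset.mul_sum]
    refine Finset.sum_congr rfl fun k _ => ?_
    rw [map_mul, ← fourier_neg]
    ring
  simp_rw [key]
  rw [integral_volume_eq_smul]
  congr 1
  rw [integral_finset_sum _ (fun k _ => (hgh.bdd_mul
      (map_continuous (fourier (-k))).aestronglyMeasurable
      (c := 1) (Filter.Eventually.of_forall fun x => (Circle.norm_coe _).le)).const_mul _)]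
  refine Finset.sum_congr rfl fun k _ => ?_
  rw [integral_const_mul, fourierCoeff]
  simp_rw [smul_eq_mul]

lemma integral_mul_conj_self (g : AddCircle L → ℂ) :
    ∫ x : AddCircle L, g x * (starRingEnd ℂ) (g x)
      = Complex.ofReal (∫ x : AddCircle L, ‖g x‖ ^ 2) := by
  rw [show ((∫ x : AddCircle L, ‖g x‖ ^ 2 : ℝ) : ℂ) = ∫ x : AddCircle L, ((‖g x‖ ^ 2 : ℝ) : ℂ)
    from integral_ofReal.symm]
  refine integral_congr_ae (Filter.Eventually.of_forall fun x => ?_)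
  simp [Complex.mul_conj']

lemma l2norm_sq_eq (g : AddCircle L → ℂ) :
    l2norm L g ^ 2 = ∫ x : AddCircle L, ‖g x‖ ^ 2 :=
  Real.sq_sqrt (integral_nonneg fun x => sq_nonneg _)

lemma l2norm_sq_trigSum (N : ℕ) (c : ℤ → ℂ) :
    l2norm L (trigSum L N c) ^ 2 = L * ∑ k ∈ Finset.Icc (-(N : ℤ)) (N : ℤ), ‖c k‖ ^ 2 := by
  have h := pairing (trigSum L N c) (cint _ (trigSum_continuous N c)) N c
  rw [integral_mul_conj_self] at h
  rw [l2norm_sq_eq, ← Complex.ofReal_inj, h]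
  simp_rw [fourierCoeff_trigSum]
  push_cast
  refine congrArg _ (Finset.sum_congr rfl fun k hk => ?_)
  rw [if_pos hk, Complex.conj_mul']

lemma hasDerivWithinAt_norm_sq {a : ℝ → ℂ} {a' : ℂ} {s : Set ℝ} {x : ℝ}
    (h : HasDerivWithinAt a a' s x) :
    HasDerivWithinAt (fun σ => ‖a σ‖ ^ 2)
      (2 * ((a x).re * a'.re + (a x).im * a'.im)) s x := by
  have hre : HasDerivWithinAt (fun σ => (a σ).re) a'.re s x :=
    Complex.reCLM.hasFDerivAt.comp_hasDerivWithinAt x h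
  have him : HasDerivWithinAt (fun σ => (a σ).im) a'.im s x :=
    Complex.imCLM.hasFDerivAt.comp_hasDerivWithinAt x h
  have key : (fun σ => ‖a σ‖ ^ 2)
      = fun σ => (a σ).re * (a σ).re + (a σ).im * (a σ).im := by
    funext σ
    rw [Complex.sq_norm, Complex.normSq_apply]
  rw [key]
  convert (hre.mul hre).add (him.mul him) using 1
  · rfl
  · rfl
  · rfl
  · ring

lemma integral_four (f1 f2 f3 f4 : AddCircle L → ℂ) (h1 : Integrable f1 volume)
    (h2 : Integrable f2 volume) (h3 : Integrable f3 volume) (h4 : Integrable f4 volume) :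
    ∫ x : AddCircle L, (f1 x + f2 x) + (f3 x + f4 x)
      = ((∫ x : AddCircle L, f1 x) + ∫ x : AddCircle L, f2 x)
        + ((∫ x : AddCircle L, f3 x) + ∫ x : AddCircle L, f4 x) := by
  have h := integral_add (μ := (volume : Measure (AddCircle L))) (h1.add h2) (h3.add h4)
  simp only [Pi.add_apply] at h
  rw [h, integral_add h1 h2, integral_add h3 h4]

lemma integral_sub3 (f1 f2 f3 : AddCircle L → ℂ) (h1 : Integrable f1 volume)
    (h2 : Integrable f2 volume) (h3 : Integrable f3 volume) :
    ∫ x : AddCircle L, f1 x - (f2 x - f3 x)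
      = (∫ x : AddCircle L, f1 x)
        - ((∫ x : AddCircle L, f2 x) - ∫ x : AddCircle L, f3 x) := by
  have h := integral_sub (μ := (volume : Measure (AddCircle L))) h1 (h2.sub h3)
  simp only [Pi.sub_apply] at h
  rw [h, integral_sub h2 h3]

lemma energy_core (n m : ℕ) (hmn : m ≤ n)
    (a a' vcs : ℤ → ℂ) (r : ℤ → ℝ) (f : AddCircle L → ℂ) (hf : Integrable f volume) (γ μ : ℝ)
    (hpde : ∀ x : AddCircle L,
      Complex.I * trigSum L n a' x
        + trigSum L n (fun k => Complex.ofReal (r k) * a k) x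
        + lowProj L n (fun y => Complex.ofReal (‖trigSum L n a y‖ ^ 2) * trigSum L n a y) x
        + Complex.I * (γ : ℂ) * trigSum L n a x
      = lowProj L n f x
        - Complex.I * (μ : ℂ) * (lowProj L m (trigSum L n a) x - trigSum L m vcs x)) :
    L * ∑ k ∈ Finset.Icc (-(n : ℤ)) (n : ℤ), ((starRingEnd ℂ) (a k) * a' k).re
      = (∫ x : AddCircle L, f x * (starRingEnd ℂ) (trigSum L n a x)).im
        + μ * (∫ x : AddCircle L,
            trigSum L m vcs x * (starRingEnd ℂ) (lowProj L m (trigSum L n a) x)).re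
        - γ * (l2norm L (trigSum L n a)) ^ 2
        - μ * (l2norm L (lowProj L m (trigSum L n a))) ^ 2 := by
  classical
  have hBA : Finset.Icc (-(m : ℤ)) (m : ℤ) ⊆ Finset.Icc (-(n : ℤ)) (n : ℤ) :=
    Finset.Icc_subset_Icc (by exact_mod_cast neg_le_neg (Nat.cast_le.mpr hmn))
      (by exact_mod_cast Nat.cast_le.mpr hmn)
  have hWc : Continuous (trigSum L n a) := trigSum_continuous n a
  have hWsc : Continuous (trigSum L n a') := trigSum_continuous n a'
  have hWxxc : Continuous (trigSum L n (fun k => Complex.ofReal (r k) * a k)) :=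
    trigSum_continuous n _
  have hNlc : Continuous (fun y => Complex.ofReal (‖trigSum L n a y‖ ^ 2) * trigSum L n a y) :=
    (Complex.continuous_ofReal.comp ((hWc.norm).pow 2)).mul hWc
  have hPnNc : Continuous (lowProj L n
      (fun y => Complex.ofReal (‖trigSum L n a y‖ ^ 2) * trigSum L n a y)) :=
    trigSum_continuous n _
  have hPfc : Continuous (lowProj L n f) := trigSum_continuous n _
  have hPmWc : Continuous (lowProj L m (trigSum L n a)) := trigSum_continuous m _
  have hVc : Continuous (trigSum L m vcs) := trigSum_continuous m vcs
  have hconjW : Continuous (fun x => (starRingEnd ℂ) (trigSum L n a x)) :=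
    Complex.continuous_conj.comp hWc
  -- the integrated PDE
  have hint : (∫ x : AddCircle L,
        (Complex.I * trigSum L n a' x
          + trigSum L n (fun k => Complex.ofReal (r k) * a k) x
          + lowProj L n (fun y => Complex.ofReal (‖trigSum L n a y‖ ^ 2) * trigSum L n a y) x
          + Complex.I * (γ : ℂ) * trigSum L n a x) * (starRingEnd ℂ) (trigSum L n a x))
      = ∫ x : AddCircle L,
          (lowProj L n f x
            - Complex.I * (μ : ℂ) * (lowProj L m (trigSum L n a) x - trigSum L m vcs x))
            * (starRingEnd ℂ) (trigSum L n a x) := by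
    refine integral_congr_ae (Filter.Eventually.of_forall fun x => ?_)
    simp only []
    rw [hpde x]
  -- split the left side
  have hsplitL : (∫ x : AddCircle L,
        (Complex.I * trigSum L n a' x
          + trigSum L n (fun k => Complex.ofReal (r k) * a k) x
          + lowProj L n (fun y => Complex.ofReal (‖trigSum L n a y‖ ^ 2) * trigSum L n a y) x
          + Complex.I * (γ : ℂ) * trigSum L n a x) * (starRingEnd ℂ) (trigSum L n a x))
      = Complex.I * (∫ x : AddCircle L, trigSum L n a' x * (starRingEnd ℂ) (trigSum L n a x))
        + (∫ x : AddCircle L, trigSum L n (fun k => Complex.ofReal (r k) * a k) x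
            * (starRingEnd ℂ) (trigSum L n a x))
        + (∫ x : AddCircle L,
            lowProj L n (fun y => Complex.ofReal (‖trigSum L n a y‖ ^ 2) * trigSum L n a y) x
            * (starRingEnd ℂ) (trigSum L n a x))
        + Complex.I * (γ : ℂ)
            * (∫ x : AddCircle L, trigSum L n a x * (starRingEnd ℂ) (trigSum L n a x)) := by
    have key : ∀ x : AddCircle L,
        (Complex.I * trigSum L n a' x
          + trigSum L n (fun k => Complex.ofReal (r k) * a k) x
          + lowProj L n (fun y => Complex.ofReal (‖trigSum L n a y‖ ^ 2) * trigSum L n a y) x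
          + Complex.I * (γ : ℂ) * trigSum L n a x) * (starRingEnd ℂ) (trigSum L n a x)
        = (Complex.I * (trigSum L n a' x * (starRingEnd ℂ) (trigSum L n a x))
            + trigSum L n (fun k => Complex.ofReal (r k) * a k) x
              * (starRingEnd ℂ) (trigSum L n a x))
          + (lowProj L n (fun y => Complex.ofReal (‖trigSum L n a y‖ ^ 2) * trigSum L n a y) x
              * (starRingEnd ℂ) (trigSum L n a x)
            + Complex.I * (γ : ℂ)
              * (trigSum L n a x * (starRingEnd ℂ) (trigSum L n a x))) := fun x => by ring
    have i1 : Integrable (fun x : AddCircle L =>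
        Complex.I * (trigSum L n a' x * (starRingEnd ℂ) (trigSum L n a x))) volume :=
      cint _ (continuous_const.mul (hWsc.mul hconjW))
    have i2 : Integrable (fun x : AddCircle L =>
        trigSum L n (fun k => Complex.ofReal (r k) * a k) x
          * (starRingEnd ℂ) (trigSum L n a x)) volume :=
      cint _ (hWxxc.mul hconjW)
    have i3 : Integrable (fun x : AddCircle L =>
        lowProj L n (fun y => Complex.ofReal (‖trigSum L n a y‖ ^ 2) * trigSum L n a y) x
          * (starRingEnd ℂ) (trigSum L n a x)) volume :=
      cint _ (hPnNc.mul hconjW)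
    have i4 : Integrable (fun x : AddCircle L =>
        Complex.I * (γ : ℂ) * (trigSum L n a x * (starRingEnd ℂ) (trigSum L n a x))) volume :=
      cint _ (continuous_const.mul (hWc.mul hconjW))
    simp_rw [key]
    refine (integral_four _ _ _ _ i1 i2 i3 i4).trans ?_
    rw [integral_const_mul, integral_const_mul]
    ring
  -- split the right side
  have hsplitR : ∫ x : AddCircle L,
        (lowProj L n f x
          - Complex.I * (μ : ℂ) * (lowProj L m (trigSum L n a) x - trigSum L m vcs x))
          * (starRingEnd ℂ) (trigSum L n a x)
      = (∫ x : AddCircle L, lowProj L n f x * (starRingEnd ℂ) (trigSum L n a x))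
        - Complex.I * (μ : ℂ)
          * ((∫ x : AddCircle L, lowProj L m (trigSum L n a) x
                * (starRingEnd ℂ) (trigSum L n a x))
            - ∫ x : AddCircle L, trigSum L m vcs x * (starRingEnd ℂ) (trigSum L n a x)) := by
    have key : ∀ x : AddCircle L,
        (lowProj L n f x
          - Complex.I * (μ : ℂ) * (lowProj L m (trigSum L n a) x - trigSum L m vcs x))
          * (starRingEnd ℂ) (trigSum L n a x)
        = lowProj L n f x * (starRingEnd ℂ) (trigSum L n a x)
          - (Complex.I * (μ : ℂ)
              * (lowProj L m (trigSum L n a) x * (starRingEnd ℂ) (trigSum L n a x))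
            - Complex.I * (μ : ℂ)
              * (trigSum L m vcs x * (starRingEnd ℂ) (trigSum L n a x))) := fun x => by ring
    have j1 : Integrable (fun x : AddCircle L =>
        lowProj L n f x * (starRingEnd ℂ) (trigSum L n a x)) volume :=
      cint _ (hPfc.mul hconjW)
    have j2 : Integrable (fun x : AddCircle L =>
        Complex.I * (μ : ℂ)
          * (lowProj L m (trigSum L n a) x * (starRingEnd ℂ) (trigSum L n a x))) volume :=
      cint _ (continuous_const.mul (hPmWc.mul hconjW))
    have j3 : Integrable (fun x : AddCircle L =>
        Complex.I * (μ : ℂ) * (trigSum L m vcs x * (starRingEnd ℂ) (trigSum L n a x))) volume :=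
      cint _ (continuous_const.mul (hVc.mul hconjW))
    simp_rw [key]
    refine (integral_sub3 _ _ _ j1 j2 j3).trans ?_
    rw [integral_const_mul, integral_const_mul]
    ring
  rw [hsplitL, hsplitR] at hint
  -- compute the individual integrals
  have h1 : (∫ x : AddCircle L, trigSum L n a' x * (starRingEnd ℂ) (trigSum L n a x))
      = (L : ℂ) * ∑ k ∈ Finset.Icc (-(n : ℤ)) (n : ℤ), (starRingEnd ℂ) (a k) * a' k := by
    rw [pairing _ (cint _ hWsc) n a]
    exact congrArg _ (Finset.sum_congr rfl fun k hk => by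
      rw [fourierCoeff_trigSum, if_pos hk])
  have h2 : (∫ x : AddCircle L, trigSum L n (fun k => Complex.ofReal (r k) * a k) x
      * (starRingEnd ℂ) (trigSum L n a x)).im = 0 := by
    rw [pairing _ (cint _ hWxxc) n a]
    have e : ∀ k ∈ Finset.Icc (-(n : ℤ)) (n : ℤ),
        (starRingEnd ℂ) (a k) * fourierCoeff (trigSum L n (fun k => Complex.ofReal (r k) * a k)) k
        = Complex.ofReal (r k * ‖a k‖ ^ 2) := fun k hk => by
      rw [fourierCoeff_trigSum, if_pos hk, mul_left_comm, Complex.conj_mul']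
      push_cast; ring
    rw [Finset.sum_congr rfl e, ← Complex.ofReal_sum, ← Complex.ofReal_mul, Complex.ofReal_im]
  have h3 : (∫ x : AddCircle L,
        lowProj L n (fun y => Complex.ofReal (‖trigSum L n a y‖ ^ 2) * trigSum L n a y) x
          * (starRingEnd ℂ) (trigSum L n a x))
      = ∫ x : AddCircle L, (Complex.ofReal (‖trigSum L n a x‖ ^ 2) * trigSum L n a x)
          * (starRingEnd ℂ) (trigSum L n a x) := by
    rw [pairing _ (cint _ hPnNc) n a, pairing _ (cint _ hNlc) n a]
    refine congrArg _ (Finset.sum_congr rfl fun k hk => ?_)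
    unfold lowProj
    rw [fourierCoeff_trigSum, if_pos hk]
  have h3' : (∫ x : AddCircle L, (Complex.ofReal (‖trigSum L n a x‖ ^ 2) * trigSum L n a x)
      * (starRingEnd ℂ) (trigSum L n a x)).im = 0 := by
    have e : (∫ x : AddCircle L, (Complex.ofReal (‖trigSum L n a x‖ ^ 2) * trigSum L n a x)
        * (starRingEnd ℂ) (trigSum L n a x))
        = Complex.ofReal (∫ x : AddCircle L, ‖trigSum L n a x‖ ^ 2 * ‖trigSum L n a x‖ ^ 2) := by
      rw [show ((∫ x : AddCircle L, ‖trigSum L n a x‖ ^ 2 * ‖trigSum L n a x‖ ^ 2 : ℝ) : ℂ)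
          = ∫ x : AddCircle L, ((‖trigSum L n a x‖ ^ 2 * ‖trigSum L n a x‖ ^ 2 : ℝ) : ℂ)
        from integral_ofReal.symm]
      refine integral_congr_ae (Filter.Eventually.of_forall fun x => ?_)
      simp only []
      rw [mul_assoc, Complex.mul_conj']
      push_cast; ring
    rw [e, Complex.ofReal_im]
  have h4 : (∫ x : AddCircle L, trigSum L n a x * (starRingEnd ℂ) (trigSum L n a x))
      = Complex.ofReal ((l2norm L (trigSum L n a)) ^ 2) := by
    rw [integral_mul_conj_self, l2norm_sq_eq]
  have h5 : (∫ x : AddCircle L, lowProj L n f x * (starRingEnd ℂ) (trigSum L n a x))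
      = ∫ x : AddCircle L, f x * (starRingEnd ℂ) (trigSum L n a x) := by
    rw [pairing _ (cint _ hPfc) n a, pairing f hf n a]
    refine congrArg _ (Finset.sum_congr rfl fun k hk => ?_)
    unfold lowProj
    rw [fourierCoeff_trigSum, if_pos hk]
  have h6 : (∫ x : AddCircle L, lowProj L m (trigSum L n a) x
      * (starRingEnd ℂ) (trigSum L n a x))
      = Complex.ofReal ((l2norm L (lowProj L m (trigSum L n a))) ^ 2) := by
    rw [pairing _ (cint _ hPmWc) n a]
    have e : ∀ k ∈ Finset.Icc (-(n : ℤ)) (n : ℤ),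
        (starRingEnd ℂ) (a k) * fourierCoeff (lowProj L m (trigSum L n a)) k
        = if k ∈ Finset.Icc (-(m : ℤ)) (m : ℤ) then Complex.ofReal (‖a k‖ ^ 2) else 0 :=
      fun k hk => by
        unfold lowProj
        rw [fourierCoeff_trigSum]
        split_ifs with h
        · rw [fourierCoeff_trigSum, if_pos hk, Complex.conj_mul']
          push_cast; ring
        · exact mul_zero _
    rw [Finset.sum_congr rfl e, Finset.sum_ite_mem, Finset.inter_eq_right.mpr hBA]
    show (L : ℂ) * ∑ k ∈ Finset.Icc (-(m : ℤ)) (m : ℤ), (Complex.ofReal (‖a k‖ ^ 2))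
      = Complex.ofReal ((l2norm L (trigSum L m (fun k => fourierCoeff (trigSum L n a) k))) ^ 2)
    rw [l2norm_sq_trigSum]
    push_cast
    refine congrArg _ (Finset.sum_congr rfl fun k hk => ?_)
    rw [fourierCoeff_trigSum, if_pos (hBA hk)]
  have h7 : (∫ x : AddCircle L, trigSum L m vcs x * (starRingEnd ℂ) (trigSum L n a x))
      = ∫ x : AddCircle L, trigSum L m vcs x
          * (starRingEnd ℂ) (lowProj L m (trigSum L n a) x) := by
    rw [pairing _ (cint _ hVc) n a]
    show _ = ∫ x : AddCircle L, trigSum L m vcs x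
        * (starRingEnd ℂ) (trigSum L m (fun k => fourierCoeff (trigSum L n a) k) x)
    rw [pairing _ (cint _ hVc) m _]
    have e : ∀ k ∈ Finset.Icc (-(n : ℤ)) (n : ℤ),
        (starRingEnd ℂ) (a k) * fourierCoeff (trigSum L m vcs) k
        = if k ∈ Finset.Icc (-(m : ℤ)) (m : ℤ) then (starRingEnd ℂ) (a k) * vcs k else 0 :=
      fun k hk => by
        rw [fourierCoeff_trigSum]
        split_ifs
        · rfl
        · exact mul_zero _
    rw [Finset.sum_congr rfl e, Finset.sum_ite_mem, Finset.inter_eq_right.mpr hBA]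
    refine congrArg _ (Finset.sum_congr rfl fun k hk => ?_)
    rw [fourierCoeff_trigSum, if_pos (hBA hk), fourierCoeff_trigSum, if_pos hk]
  rw [h1, h3, h4, h5, h6, h7] at hint
  have him := congrArg Complex.im hint
  simp only [Complex.add_im, Complex.sub_im, Complex.add_re, Complex.sub_re, Complex.mul_im,
    Complex.mul_re, Complex.I_re, Complex.I_im, Complex.ofReal_re, Complex.ofReal_im, h2, h3',
    zero_mul, one_mul, mul_zero, zero_add, add_zero, sub_zero, zero_sub, mul_neg, neg_mul,
    neg_neg, neg_zero] at him
  rw [Complex.re_sum] at him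
  linarith [him]

end AuxLemmas

/-- A Galerkin solution of the feedback-controlled damped driven NLS:
`w(s,x) = ∑_{|k| ≤ n} a_k(s) e^{2πikx/L}` with differentiable coefficients on `[-k₀, ∞)`,
satisfying `i ∂ₛ w + ∂ₓ² w + P_n(|w|² w) + iγ w = P_n f - iμ (P_m w - v(s))`
with `w(-k₀, ·) = 0`, where the datum `v(s) = ∑_{|k| ≤ m} (vc k s) e^{2πikx/L}` is a
continuously differentiable map into trigonometric polynomials of degree ≤ m with
finite `X`-norm `sup_s ‖v(s)‖ + sup_s ‖∂ₛ v(s)‖`. -/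
structure GalerkinSolution (L : ℝ) [Fact (0 < L)] where
  /-- damping parameter -/
  γ : ℝ
  /-- feedback (relaxation) parameter -/
  μ : ℝ
  hγ : 0 < γ
  hμ : 0 < μ
  /-- number of observed low modes -/
  m : ℕ
  /-- Galerkin truncation level -/
  n : ℕ
  hmn : m ≤ n
  /-- the forcing term, in `L²(AddCircle L)` -/
  f : AddCircle L → ℂ
  hf : MeasureTheory.MemLp f 2 MeasureTheory.volume
  /-- the initial time is `-k₀` -/
  k₀ : ℝ
  /-- the Fourier coefficients of the datum `v` -/
  vc : ℤ → ℝ → ℂ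
  hvc : ∀ k : ℤ, ContDiff ℝ 1 (vc k)
  /-- `|v|_X < ∞` -/
  hvX : ∃ C : ℝ, ∀ s : ℝ,
    l2norm L (trigSum L m (fun k => vc k s))
      + l2norm L (trigSum L m (fun k => deriv (vc k) s)) ≤ C
  /-- the coefficients of the Galerkin solution -/
  a : ℤ → ℝ → ℂ
  /-- the time derivatives of the coefficients -/
  a' : ℤ → ℝ → ℂ
  ha : ∀ (k : ℤ) (s : ℝ), -k₀ ≤ s → HasDerivWithinAt (a k) (a' k s) (Set.Ici (-k₀)) s
  hinit : ∀ k : ℤ, a k (-k₀) = 0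
  heq : ∀ (s : ℝ), -k₀ ≤ s → ∀ x : AddCircle L,
    Complex.I * trigSum L n (fun k => a' k s) x
      + trigSum L n (fun k => Complex.ofReal (-((2 * Real.pi * (k : ℝ) / L) ^ 2)) * a k s) x
      + lowProj L n (fun y => Complex.ofReal (‖trigSum L n (fun k => a k s) y‖ ^ 2)
          * trigSum L n (fun k => a k s) y) x
      + Complex.I * (γ : ℂ) * trigSum L n (fun k => a k s) x
      = lowProj L n f x
        - Complex.I * (μ : ℂ) * (lowProj L m (trigSum L n (fun k => a k s)) x
            - trigSum L m (fun k => vc k s) x)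

namespace GalerkinSolution

variable {L : ℝ} [Fact (0 < L)]

/-- the solution `w(s, ·)` -/
noncomputable def w (G : GalerkinSolution L) (s : ℝ) : AddCircle L → ℂ :=
  trigSum L G.n (fun k => G.a k s)

/-- the time derivative `∂ₛ w(s, ·)` -/
noncomputable def ws (G : GalerkinSolution L) (s : ℝ) : AddCircle L → ℂ :=
  trigSum L G.n (fun k => G.a' k s)

/-- the spatial derivative `∂ₓ w(s, ·)` -/
noncomputable def wx (G : GalerkinSolution L) (s : ℝ) : AddCircle L → ℂ :=
  trigSum L G.n (fun k => Complex.ofReal (2 * Real.pi * (k : ℝ) / L) * Complex.I * G.a k s)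

/-- the second spatial derivative `∂ₓ² w(s, ·)` -/
noncomputable def wxx (G : GalerkinSolution L) (s : ℝ) : AddCircle L → ℂ :=
  trigSum L G.n (fun k => Complex.ofReal (-((2 * Real.pi * (k : ℝ) / L) ^ 2)) * G.a k s)

/-- the datum `v(s)` -/
noncomputable def v (G : GalerkinSolution L) (s : ℝ) : AddCircle L → ℂ :=
  trigSum L G.m (fun k => G.vc k s)

/-- the time derivative `∂ₛ v(s)` of the datum -/
noncomputable def vs (G : GalerkinSolution L) (s : ℝ) : AddCircle L → ℂ :=
  trigSum L G.m (fun k => deriv (G.vc k) s)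

/-- the norm `|v|_X = sup_s ‖v(s)‖ + sup_s ‖∂ₛ v(s)‖` of the datum -/
noncomputable def normX (G : GalerkinSolution L) : ℝ :=
  (⨆ s : ℝ, l2norm L (G.v s)) + ⨆ s : ℝ, l2norm L (G.vs s)

end GalerkinSolution

/-- for a Galerkin solution `w` and every `s ≥ -k₀`,
`(1/2) (d/ds)‖w(s)‖² + γ‖w(s)‖² + μ‖P_m w(s)‖²
  = Im ∫ f · conj w(s) + μ Re ∫ v(s) · conj (P_m w(s))`;
equivalently, `s ↦ ‖w(s)‖²` has (one-sided) derivative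
`2 (Im ∫ f conj w + μ Re ∫ v conj (P_m w) - γ‖w‖² - μ‖P_m w‖²)` within `[-k₀, ∞)`. -/
theorem galerkin_energy_identity (L : ℝ) [Fact (0 < L)] (G : GalerkinSolution L)
    (s : ℝ) (hs : -G.k₀ ≤ s) :
    HasDerivWithinAt (fun σ : ℝ => (l2norm L (G.w σ)) ^ 2)
      (2 * ((∫ x : AddCircle L, G.f x * (starRingEnd ℂ) (G.w s x)).im
        + G.μ * (∫ x : AddCircle L, G.v s x * (starRingEnd ℂ) (lowProj L G.m (G.w s) x)).re
        - G.γ * (l2norm L (G.w s)) ^ 2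
        - G.μ * (l2norm L (lowProj L G.m (G.w s))) ^ 2))
      (Set.Ici (-G.k₀)) s := by
  classical
  simp only [GalerkinSolution.w, GalerkinSolution.v]
  have hfun : (fun σ : ℝ => (l2norm L (trigSum L G.n (fun k => G.a k σ))) ^ 2)
      = fun σ => L * ∑ k ∈ Finset.Icc (-(G.n : ℤ)) (G.n : ℤ), ‖G.a k σ‖ ^ 2 :=
    funext fun σ => l2norm_sq_trigSum _ _
  rw [hfun]
  have hd : HasDerivWithinAt
      (fun σ => L * ∑ k ∈ Finset.Icc (-(G.n : ℤ)) (G.n : ℤ), ‖G.a k σ‖ ^ 2)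
      (L * ∑ k ∈ Finset.Icc (-(G.n : ℤ)) (G.n : ℤ),
        2 * ((G.a k s).re * (G.a' k s).re + (G.a k s).im * (G.a' k s).im))
      (Set.Ici (-G.k₀)) s :=
    (HasDerivWithinAt.fun_sum fun k _ => hasDerivWithinAt_norm_sq (G.ha k s hs)).const_mul L
  convert hd using 1
  have core := energy_core G.n G.m G.hmn (fun k => G.a k s) (fun k => G.a' k s)
    (fun k => G.vc k s) (fun k => -((2 * Real.pi * (k : ℝ) / L) ^ 2)) G.f
    (G.hf.integrable (by norm_num)) G.γ G.μ (G.heq s hs)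
  have hsum : ∑ k ∈ Finset.Icc (-(G.n : ℤ)) (G.n : ℤ),
      2 * ((G.a k s).re * (G.a' k s).re + (G.a k s).im * (G.a' k s).im)
      = 2 * ∑ k ∈ Finset.Icc (-(G.n : ℤ)) (G.n : ℤ),
          ((starRingEnd ℂ) (G.a k s) * G.a' k s).re := by
    rw [Finset.mul_sum]
    refine Finset.sum_congr rfl fun k _ => ?_
    simp only [Complex.mul_re, Complex.conj_re, Complex.conj_im]
    ring
  rw [hsum]
  linarith [core]
end

section
/- There is a constant c > 0 depending only on L with the following property: for every continuously differentiable w : AddCircle L → ℂ, every f, v ∈ L²(AddCircle L), every μ ≥ 0 and R > 0 with ‖w‖ ≤ R, and every ξ ∈ (0,1), one has ‖w_x‖² − (1/2)‖w‖_{L⁴}⁴ + 2 Re ∫₀^L f·conj(w) − 2μ Im ∫₀^L v·conj(w) ≥ (1−ξ)(‖w_x‖² + ‖w‖²) − [c²R⁶/(16ξ) + (c/2)R⁴ + 2‖f‖R + 2μ‖v‖R + (1−ξ)R²]. -/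
open MeasureTheory Finset

private lemma contMemLp {L : ℝ} [Fact (0 < L)] {E : Type*} [NormedAddCommGroup E]
    {g : AddCircle L → E} (hg : Continuous g) (p : ENNReal) : MemLp g p volume :=
  hg.memLp_of_hasCompactSupport
    (IsCompact.of_isClosed_subset isCompact_univ (isClosed_tsupport g) (Set.subset_univ _))

private lemma contInt {L : ℝ} [Fact (0 < L)] {g : AddCircle L → ℝ} (hg : Continuous g) :
    Integrable g volume :=
  (contMemLp hg 1).integrable le_rfl

private lemma myCS {α : Type*} [MeasurableSpace α] {μ : Measure α} (F G : α → ℝ)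
    (hF0 : ∀ x, 0 ≤ F x) (hG0 : ∀ x, 0 ≤ G x)
    (hF : MemLp F 2 μ) (hG : MemLp G 2 μ) :
    ∫ a, F a * G a ∂μ ≤ Real.sqrt (∫ a, F a ^ 2 ∂μ) * Real.sqrt (∫ a, G a ^ 2 ∂μ) := by
  have h := integral_mul_le_Lp_mul_Lq_of_nonneg (μ := μ) (p := 2) (q := 2) ⟨by norm_num, by norm_num, by norm_num⟩
    (Filter.Eventually.of_forall hF0) (Filter.Eventually.of_forall hG0) (by simpa using hF) (by simpa using hG)
  have e1 : ∀ x, F x ^ (2:ℝ) = F x ^ 2 := fun x => by rw [← Real.rpow_natCast (F x) 2]; norm_num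
  have e2 : ∀ x, G x ^ (2:ℝ) = G x ^ 2 := fun x => by rw [← Real.rpow_natCast (G x) 2]; norm_num
  simp_rw [e1, e2] at h
  rw [Real.sqrt_eq_rpow, Real.sqrt_eq_rpow]
  convert h using 2 <;> norm_num

private lemma repIoc (L : ℝ) [Fact (0 < L)] (y : ℝ) (z : AddCircle L) :
    ∃ x : ℝ, x ∈ Set.Ioc y (y + L) ∧ (x : AddCircle L) = z := by
  set s := AddCircle.equivIoc L y z with hs
  refine ⟨(s : ℝ), s.2, ?_⟩
  exact (AddCircle.equivIoc L y).symm_apply_apply z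

/-- Key Gagliardo–Nirenberg-type pointwise bound. -/
private lemma sup_bound {L : ℝ} [Fact (0 < L)] (w w' : AddCircle L → ℂ)
    (hderiv : ∀ t : ℝ, HasDerivAt (fun τ : ℝ => w (τ : AddCircle L)) (w' (t : AddCircle L)) t)
    (hw' : Continuous w') (y : ℝ) (z : AddCircle L) :
    ‖w z‖ ^ 2 ≤ ‖w (y : AddCircle L)‖ ^ 2
      + ∫ x : AddCircle L, 2 * (‖w x‖ * ‖w' x‖) := by
  have hL : 0 < L := Fact.out
  have hcoe : Continuous (fun t : ℝ => (t : AddCircle L)) := continuous_quotient_mk'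
  have hwc : Continuous w :=
    (QuotientAddGroup.isOpenQuotientMap_mk.continuous_comp_iff).mp
      (continuous_iff_continuousAt.mpr (fun t => (hderiv t).continuousAt))
  set D : ℝ → ℝ := fun t =>
    2 * ((w ↑t).re * (w' ↑t).re + (w ↑t).im * (w' ↑t).im) with hDdef
  have hD : ∀ t : ℝ, HasDerivAt (fun s : ℝ => ‖w (s : AddCircle L)‖ ^ 2) (D t) t := by
    intro t
    have h1 := hderiv t
    have hre : HasDerivAt (fun s : ℝ => (w (s : AddCircle L)).re) ((w' ↑t).re) t :=
      Complex.reCLM.hasFDerivAt.comp_hasDerivAt t h1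
    have him : HasDerivAt (fun s : ℝ => (w (s : AddCircle L)).im) ((w' ↑t).im) t :=
      Complex.imCLM.hasFDerivAt.comp_hasDerivAt t h1
    have h2 := (hre.mul hre).add (him.mul him)
    have heq : (fun s : ℝ => ‖w (s : AddCircle L)‖ ^ 2)
        = fun s : ℝ => (w (s : AddCircle L)).re * (w (s : AddCircle L)).re
          + (w (s : AddCircle L)).im * (w (s : AddCircle L)).im := by
      funext s
      rw [← Complex.normSq_apply, ← Complex.sq_norm]
    rw [heq]
    have h3 : D t = (w' ↑t).re * (w ↑t).re + (w ↑t).re * (w' ↑t).re + ((w' ↑t).im * (w ↑t).im + (w ↑t).im * (w' ↑t).im) := by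
      rw [hDdef]; ring
    rw [h3]; exact h2
  set K : AddCircle L → ℝ := fun x => 2 * (‖w x‖ * ‖w' x‖) with hKdef
  have hKc : Continuous K := by
    apply Continuous.mul continuous_const
    exact (hwc.norm).mul (hw'.norm)
  have hDc : Continuous D := by
    apply Continuous.mul continuous_const
    apply Continuous.add
    · exact ((Complex.continuous_re.comp (hwc.comp hcoe)).mul
        (Complex.continuous_re.comp (hw'.comp hcoe)))
    · exact ((Complex.continuous_im.comp (hwc.comp hcoe)).mul
        (Complex.continuous_im.comp (hw'.comp hcoe)))
  have hDK : ∀ t : ℝ, D t ≤ K ↑t := by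
    intro t
    have e1 : ‖w (↑t : AddCircle L)‖ ^ 2 = (w ↑t).re ^ 2 + (w ↑t).im ^ 2 := by
      rw [Complex.sq_norm, Complex.normSq_apply]; ring
    have e2 : ‖w' (↑t : AddCircle L)‖ ^ 2 = (w' ↑t).re ^ 2 + (w' ↑t).im ^ 2 := by
      rw [Complex.sq_norm, Complex.normSq_apply]; ring
    have n1 : (0:ℝ) ≤ ‖w (↑t : AddCircle L)‖ := norm_nonneg _
    have n2 : (0:ℝ) ≤ ‖w' (↑t : AddCircle L)‖ := norm_nonneg _
    rw [hDdef, hKdef]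
    dsimp only
    nlinarith [sq_nonneg ((w ↑t).re * (w' ↑t).im - (w ↑t).im * (w' ↑t).re),
      mul_nonneg n1 n2, sq_nonneg (‖w (↑t : AddCircle L)‖ * ‖w' (↑t : AddCircle L)‖
        - ((w ↑t).re * (w' ↑t).re + (w ↑t).im * (w' ↑t).im))]
  obtain ⟨x, hx, hxz⟩ := repIoc L y z
  have hyx : y ≤ x := le_of_lt hx.1
  have hftc : ‖w (↑x : AddCircle L)‖ ^ 2 - ‖w (↑y : AddCircle L)‖ ^ 2 = ∫ t in y..x, D t :=
    (intervalIntegral.integral_eq_sub_of_hasDerivAt (fun t _ => hD t)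
      (hDc.intervalIntegrable _ _)).symm
  have hmono1 : ∫ t in y..x, D t ≤ ∫ t in y..x, K ↑t := by
    apply intervalIntegral.integral_mono_on hyx (hDc.intervalIntegrable _ _)
      ((hKc.comp hcoe).intervalIntegrable _ _)
    exact fun t _ => hDK t
  have hmono2 : ∫ t in y..x, K ↑t ≤ ∫ t in y..(y + L), K ↑t := by
    apply intervalIntegral.integral_mono_interval le_rfl hyx hx.2
    · exact Filter.Eventually.of_forall fun t =>
        mul_nonneg (by norm_num) (mul_nonneg (norm_nonneg _) (norm_nonneg _))
    · exact (hKc.comp hcoe).intervalIntegrable _ _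
  have hper : ∫ t in y..(y + L), K ↑t = ∫ x : AddCircle L, K x :=
    AddCircle.intervalIntegral_preimage L y K
  rw [← hxz]
  have := hftc.le.trans (hmono1.trans (hmono2.trans_eq hper))
  linarith [this]

/-- lower bound for the functional `φ`: there is `c > 0` depending only on
`L` such that for every continuously differentiable `w`, every `f, v ∈ L²`, every `μ ≥ 0`
and `R > 0` with `‖w‖ ≤ R`, and every `ξ ∈ (0,1)`:
`‖w_x‖² - (1/2)‖w‖_{L⁴}⁴ + 2 Re ∫ f conj w - 2μ Im ∫ v conj w
  ≥ (1-ξ)(‖w_x‖² + ‖w‖²) - [c²R⁶/(16ξ) + (c/2)R⁴ + 2‖f‖R + 2μ‖v‖R + (1-ξ)R²]`. -/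
theorem phi_lower_bound (L : ℝ) [Fact (0 < L)] :
    ∃ c : ℝ, 0 < c ∧ ∀ (w w' : AddCircle L → ℂ),
      (∀ t : ℝ, HasDerivAt (fun τ : ℝ => w (τ : AddCircle L)) (w' (t : AddCircle L)) t) →
      Continuous w' →
      ∀ (f v : AddCircle L → ℂ), MemLp f 2 → MemLp v 2 →
      ∀ (μ R : ℝ), 0 ≤ μ → 0 < R → l2norm L w ≤ R →
      ∀ ξ : ℝ, 0 < ξ → ξ < 1 →
      (l2norm L w') ^ 2 - (1 / 2) * (∫ x : AddCircle L, ‖w x‖ ^ 4)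
          + 2 * (∫ x : AddCircle L, f x * (starRingEnd ℂ) (w x)).re
          - 2 * μ * (∫ x : AddCircle L, v x * (starRingEnd ℂ) (w x)).im
        ≥ (1 - ξ) * ((l2norm L w') ^ 2 + (l2norm L w) ^ 2)
          - (c ^ 2 * R ^ 6 / (16 * ξ) + (c / 2) * R ^ 4 + 2 * l2norm L f * R
            + 2 * μ * l2norm L v * R + (1 - ξ) * R ^ 2) := by
  have hL : 0 < L := Fact.out
  refine ⟨2 + 1 / L, by positivity, ?_⟩
  intro w w' hderiv hw' f v hf hv μ R hμ hR hwR ξ hξ0 hξ1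
  set c : ℝ := 2 + 1 / L with hc
  have hc2 : (2:ℝ) ≤ c := le_add_of_nonneg_right (by positivity)
  have hcL : 1 / L ≤ c := by linarith
  clear hc
  clear_value c
  have hcoe : Continuous (fun t : ℝ => (t : AddCircle L)) := continuous_quotient_mk'
  have hwc : Continuous w :=
    (QuotientAddGroup.isOpenQuotientMap_mk.continuous_comp_iff).mp
      (continuous_iff_continuousAt.mpr (fun t => (hderiv t).continuousAt))
  -- basic integrability
  have hiw2 : Integrable (fun x : AddCircle L => ‖w x‖ ^ 2) := contInt (by fun_prop)
  have hiw4 : Integrable (fun x : AddCircle L => ‖w x‖ ^ 4) := contInt (by fun_prop)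
  -- norms
  set Nw := l2norm L w with hNw
  set Nw' := l2norm L w' with hNw'
  set Nf := l2norm L f with hNf
  set Nv := l2norm L v with hNv
  have hNwrt : Real.sqrt (∫ x : AddCircle L, ‖w x‖ ^ 2) = Nw := rfl
  have hNw'rt : Real.sqrt (∫ x : AddCircle L, ‖w' x‖ ^ 2) = Nw' := rfl
  have hNw0 : 0 ≤ Nw := Real.sqrt_nonneg _
  have hNw'0 : 0 ≤ Nw' := Real.sqrt_nonneg _
  have hNf0 : 0 ≤ Nf := Real.sqrt_nonneg _
  have hNv0 : 0 ≤ Nv := Real.sqrt_nonneg _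
  have hNwsq : Nw ^ 2 = ∫ x : AddCircle L, ‖w x‖ ^ 2 :=
    Real.sq_sqrt (integral_nonneg fun x => sq_nonneg _)
  have hNw'sq : Nw' ^ 2 = ∫ x : AddCircle L, ‖w' x‖ ^ 2 :=
    Real.sq_sqrt (integral_nonneg fun x => sq_nonneg _)
  clear_value Nw Nw' Nf Nv
  -- Cauchy-Schwarz pairing bounds
  have pairing : ∀ g : AddCircle L → ℂ, MemLp g 2 →
      ‖∫ x : AddCircle L, g x * (starRingEnd ℂ) (w x)‖ ≤ l2norm L g * Nw := by
    intro g hg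
    have hintg : Integrable g := hg.integrable one_le_two
    obtain ⟨zmax, -, hzmax'⟩ := isCompact_univ.exists_isMaxOn Set.univ_nonempty
      hwc.norm.continuousOn
    have hzmax : ∀ x : AddCircle L, ‖w x‖ ≤ ‖w zmax‖ := fun x => hzmax' (Set.mem_univ x)
    have hmeas : AEStronglyMeasurable (fun x : AddCircle L => g x * (starRingEnd ℂ) (w x))
        volume := hg.1.mul ((continuous_star.comp hwc).aestronglyMeasurable)
    have hintF : Integrable (fun x : AddCircle L => g x * (starRingEnd ℂ) (w x)) := by
      apply (hintg.norm.mul_const ‖w zmax‖).mono' hmeas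
      refine Filter.Eventually.of_forall fun x => ?_
      rw [norm_mul, RCLike.norm_conj]
      exact mul_le_mul_of_nonneg_left (hzmax x) (norm_nonneg _)
    calc ‖∫ x : AddCircle L, g x * (starRingEnd ℂ) (w x)‖
        ≤ ∫ x : AddCircle L, ‖g x * (starRingEnd ℂ) (w x)‖ := norm_integral_le_integral_norm _
      _ = ∫ x : AddCircle L, ‖g x‖ * ‖w x‖ := by
          congr 1; funext x; rw [norm_mul, RCLike.norm_conj]
      _ ≤ Real.sqrt (∫ x : AddCircle L, ‖g x‖ ^ 2) * Real.sqrt (∫ x : AddCircle L, ‖w x‖ ^ 2) :=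
          myCS _ _ (fun x => norm_nonneg _) (fun x => norm_nonneg _) hg.norm
            ((contMemLp hwc 2).norm)
      _ = l2norm L g * Nw := by rw [hNwrt]; rfl
  have hfRe : (∫ x : AddCircle L, f x * (starRingEnd ℂ) (w x)).re ≥ -(Nf * Nw) := by
    have h1 := pairing f hf
    rw [← hNf] at h1
    have h2 := abs_le.mp (Complex.abs_re_le_norm (∫ x : AddCircle L, f x * (starRingEnd ℂ) (w x)))
    linarith [h2.1]
  have hvIm : (∫ x : AddCircle L, v x * (starRingEnd ℂ) (w x)).im ≤ Nv * Nw := by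
    have h1 := pairing v hv
    rw [← hNv] at h1
    have h2 := abs_le.mp (Complex.abs_im_le_norm (∫ x : AddCircle L, v x * (starRingEnd ℂ) (w x)))
    linarith [h2.2]
  -- Gagliardo-Nirenberg bound on the quartic term
  have hI4 : (∫ x : AddCircle L, ‖w x‖ ^ 4) ≤ Nw ^ 4 / L + 2 * (Nw ^ 3 * Nw') := by
    -- minimum point
    obtain ⟨ymin, -, hymin'⟩ := isCompact_univ.exists_isMinOn Set.univ_nonempty
      (hwc.norm.pow 2).continuousOn
    have hymin : ∀ x : AddCircle L, ‖w ymin‖ ^ 2 ≤ ‖w x‖ ^ 2 := fun x => hymin' (Set.mem_univ x)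
    obtain ⟨y, -, hy⟩ := repIoc L 0 ymin
    have hmin : L * ‖w ymin‖ ^ 2 ≤ Nw ^ 2 := by
      have h1 : ∫ _x : AddCircle L, ‖w ymin‖ ^ 2 ≤ ∫ x : AddCircle L, ‖w x‖ ^ 2 :=
        integral_mono (integrable_const _) hiw2 (fun x => hymin x)
      rw [integral_const, measureReal_def, AddCircle.measure_univ, ENNReal.toReal_ofReal hL.le,
        smul_eq_mul] at h1
      rw [hNwsq]; exact h1
    have hCS2 : (∫ x : AddCircle L, 2 * (‖w x‖ * ‖w' x‖)) ≤ 2 * (Nw * Nw') := by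
      rw [integral_const_mul]
      have := myCS (fun x : AddCircle L => ‖w x‖) (fun x => ‖w' x‖)
        (fun x => norm_nonneg _) (fun x => norm_nonneg _)
        ((contMemLp hwc 2).norm) ((contMemLp hw' 2).norm)
      beta_reduce at this
      rw [hNwrt, hNw'rt] at this
      linarith
    set B : ℝ := ‖w ymin‖ ^ 2 + ∫ x : AddCircle L, 2 * (‖w x‖ * ‖w' x‖) with hB
    have hsup : ∀ z : AddCircle L, ‖w z‖ ^ 2 ≤ B := by
      intro z
      have := sup_bound w w' hderiv hw' y z
      rw [hy] at this
      exact this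
    have hBw : (∫ x : AddCircle L, ‖w x‖ ^ 4) ≤ B * Nw ^ 2 := by
      have h1 : (∫ x : AddCircle L, ‖w x‖ ^ 4) ≤ ∫ x : AddCircle L, B * ‖w x‖ ^ 2 := by
        apply integral_mono hiw4 (hiw2.const_mul B)
        intro x
        show ‖w x‖ ^ 4 ≤ B * ‖w x‖ ^ 2
        have he : ‖w x‖ ^ 4 = ‖w x‖ ^ 2 * ‖w x‖ ^ 2 := by ring
        rw [he]
        exact mul_le_mul_of_nonneg_right (hsup x) (sq_nonneg _)
      rwa [integral_const_mul, ← hNwsq] at h1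
    have hBle : B ≤ Nw ^ 2 / L + 2 * (Nw * Nw') := by
      rw [hB]
      have : ‖w ymin‖ ^ 2 ≤ Nw ^ 2 / L := by
        rw [le_div_iff₀ hL]; linarith
      linarith
    calc (∫ x : AddCircle L, ‖w x‖ ^ 4) ≤ B * Nw ^ 2 := hBw
      _ ≤ (Nw ^ 2 / L + 2 * (Nw * Nw')) * Nw ^ 2 :=
          mul_le_mul_of_nonneg_right hBle (sq_nonneg _)
      _ = Nw ^ 4 / L + 2 * (Nw ^ 3 * Nw') := by ring
  -- Young's inequality step
  have hYoung : Nw ^ 3 * Nw' ≤ ξ * Nw' ^ 2 + c ^ 2 * R ^ 6 / (16 * ξ) := by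
    have hQ : R ^ 3 * Nw' ≤ ξ * Nw' ^ 2 + R ^ 6 / (4 * ξ) := by
      have hcan : R ^ 6 / (4 * ξ) * (4 * ξ) = R ^ 6 :=
        div_mul_cancel₀ _ (ne_of_gt (by positivity))
      nlinarith [sq_nonneg (2 * ξ * Nw' - R ^ 3), hcan, hξ0]
    have h1 : Nw ^ 3 * Nw' ≤ R ^ 3 * Nw' := by
      apply mul_le_mul_of_nonneg_right _ hNw'0
      exact pow_le_pow_left₀ hNw0 hwR 3
    have h2 : R ^ 6 / (4 * ξ) ≤ c ^ 2 * R ^ 6 / (16 * ξ) := by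
      rw [div_le_div_iff₀ (by positivity) (by positivity)]
      nlinarith [sq_nonneg (c - 2), hc2, mul_pos (pow_pos hR 6) hξ0]
    linarith
  have hNw4 : Nw ^ 4 / L ≤ c * R ^ 4 := by
    have h1 : Nw ^ 4 ≤ R ^ 4 := pow_le_pow_left₀ hNw0 hwR 4
    have h2 : Nw ^ 4 / L = (1 / L) * Nw ^ 4 := by ring
    rw [h2]
    have h4 : (1 / L) * Nw ^ 4 ≤ c * Nw ^ 4 := mul_le_mul_of_nonneg_right hcL (by positivity)
    have h3 : c * Nw ^ 4 ≤ c * R ^ 4 := mul_le_mul_of_nonneg_left h1 (by linarith)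
    linarith [pow_nonneg hNw0 4]
  have hNwR2 : (1 - ξ) * Nw ^ 2 ≤ (1 - ξ) * R ^ 2 := by
    apply mul_le_mul_of_nonneg_left _ (by linarith)
    nlinarith
  have hNfR : Nf * Nw ≤ Nf * R := mul_le_mul_of_nonneg_left hwR hNf0
  have hNvR : μ * (Nv * Nw) ≤ μ * (Nv * R) :=
    mul_le_mul_of_nonneg_left (mul_le_mul_of_nonneg_left hwR hNv0) hμ
  have hvIm' : μ * (∫ x : AddCircle L, v x * (starRingEnd ℂ) (w x)).im ≤ μ * (Nv * Nw) :=
    mul_le_mul_of_nonneg_left hvIm hμ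
  linarith
end

section
/- There is a constant c > 0 depending only on L with the following property: for every twice continuously differentiable w : AddCircle L → ℂ, every f, v ∈ L²(AddCircle L), every μ ≥ 0, and all R₀, R₁ > 0 with ‖w‖ ≤ R₀ and ‖w‖_{H¹} ≤ R₁, one has ‖w_xx‖² − 2∫₀^L |w|²|w_x|² − Re ∫₀^L w²·(conj(w_x))² − 2 Re ∫₀^L f·conj(w_xx) + 2μ Im ∫₀^L v·conj(w_xx) ≥ (1/2)‖w_xx‖² − c(R₀R₁³ + ‖f‖² + μ²‖v‖²). -/
open MeasureTheory Finset

section Aux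

variable {α : Type*} [MeasurableSpace α] {μ : Measure α} {𝕜 : Type*} [RCLike 𝕜]

lemma my_norm_toLp_sq (f : α → 𝕜) (hf : MemLp f 2 μ) :
    ‖hf.toLp f‖ = Real.sqrt (∫ x, ‖f x‖ ^ 2 ∂μ) := by
  have h1 : (inner 𝕜 (hf.toLp f) (hf.toLp f) : 𝕜) = ((‖hf.toLp f‖ : 𝕜)) ^ 2 :=
    inner_self_eq_norm_sq_to_K _
  rw [L2.inner_def] at h1
  have h2 : (∫ x, (inner 𝕜 ((hf.toLp f : α →₂[μ] 𝕜) x) ((hf.toLp f : α →₂[μ] 𝕜) x) : 𝕜) ∂μ)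
      = ∫ x, ((‖f x‖ ^ 2 : ℝ) : 𝕜) ∂μ := by
    refine integral_congr_ae ?_
    filter_upwards [hf.coeFn_toLp] with x hx
    rw [hx, inner_self_eq_norm_sq_to_K]
    norm_cast
  rw [h2, integral_ofReal] at h1
  have h3 : ‖hf.toLp f‖ ^ 2 = ∫ x, ‖f x‖ ^ 2 ∂μ := by
    refine (RCLike.ofReal_injective (K := 𝕜) ?_).symm
    push_cast
    exact h1
  rw [← h3, Real.sqrt_sq (norm_nonneg _)]

lemma my_cauchy_schwarz (f g : α → 𝕜) (hf : MemLp f 2 μ) (hg : MemLp g 2 μ) :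
    ‖∫ x, (starRingEnd 𝕜) (g x) * f x ∂μ‖ ≤
      Real.sqrt (∫ x, ‖g x‖ ^ 2 ∂μ) * Real.sqrt (∫ x, ‖f x‖ ^ 2 ∂μ) := by
  have key : (∫ x, (starRingEnd 𝕜) (g x) * f x ∂μ)
      = inner (𝕜 := 𝕜) (hg.toLp g) (hf.toLp f) := by
    rw [L2.inner_def]
    refine integral_congr_ae ?_
    filter_upwards [hf.coeFn_toLp, hg.coeFn_toLp] with x h1 h2
    simp [RCLike.inner_apply, h1, h2, mul_comm]
  rw [key, ← my_norm_toLp_sq f hf, ← my_norm_toLp_sq g hg]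
  exact norm_inner_le_norm _ _

lemma my_agmon {L : ℝ} (hL : 0 < L) {F F' : ℝ → ℂ} (hF : ∀ t, HasDerivAt F (F' t) t)
    (hF'c : Continuous F') {s : ℝ} (hs : s ∈ Set.Icc 0 L) :
    ‖F s‖ ^ 2 ≤ (1 / L) * (∫ t in (0:ℝ)..L, ‖F t‖ ^ 2)
        + 2 * ∫ t in (0:ℝ)..L, ‖F t‖ * ‖F' t‖ := by
  have hFc : Continuous F := continuous_iff_continuousAt.mpr fun t => (hF t).continuousAt
  set G : ℝ → ℝ := fun t => ‖F t‖ ^ 2 with hGdef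
  set g : ℝ → ℝ := fun t => (F' t * (starRingEnd ℂ) (F t) + F t * (starRingEnd ℂ) (F' t)).re
    with hgdef
  have hGc : Continuous G := by fun_prop
  have hgc : Continuous g := by
    apply Complex.continuous_re.comp
    exact (hF'c.mul (Complex.continuous_conj.comp hFc)).add
      (hFc.mul (Complex.continuous_conj.comp hF'c))
  have hG : ∀ t, HasDerivAt G (g t) t := by
    intro t
    have h1 : HasDerivAt (fun t => F t * (starRingEnd ℂ) (F t))
        (F' t * (starRingEnd ℂ) (F t) + F t * (starRingEnd ℂ) (F' t)) t := by
      have hh := (hF t).mul (hF t).star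
      simp only [RCLike.star_def] at hh
      exact hh
    have h2 := (Complex.reCLM.hasFDerivAt.comp_hasDerivAt t h1)
    simp only [Function.comp_def] at h2
    have h3 : (fun t => Complex.reCLM (F t * (starRingEnd ℂ) (F t))) = G := by
      ext t
      simp only [Complex.reCLM_apply, Complex.mul_conj, hGdef, Complex.ofReal_re]
      rw [Complex.normSq_eq_norm_sq]
    rw [h3] at h2
    exact h2
  have hg_bound : ∀ t, |g t| ≤ 2 * (‖F t‖ * ‖F' t‖) := by
    intro t
    calc |g t| ≤ ‖F' t * (starRingEnd ℂ) (F t) + F t * (starRingEnd ℂ) (F' t)‖ :=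
          Complex.abs_re_le_norm _
      _ ≤ ‖F' t * (starRingEnd ℂ) (F t)‖ + ‖F t * (starRingEnd ℂ) (F' t)‖ := norm_add_le _ _
      _ = 2 * (‖F t‖ * ‖F' t‖) := by simp [norm_mul]; ring
  obtain ⟨y, hy, hmin⟩ := isCompact_Icc.exists_isMinOn (Set.nonempty_Icc.mpr hL.le)
    hGc.continuousOn
  have hGy : L * G y ≤ ∫ t in (0:ℝ)..L, G t := by
    have h := intervalIntegral.integral_mono_on (μ := volume) hL.le
      (_root_.intervalIntegrable_const) (hGc.intervalIntegrable 0 L)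
      (fun t ht => hmin ht)
    simpa using h
  have hFTC : ∫ t in y..s, g t = G s - G y :=
    intervalIntegral.integral_eq_sub_of_hasDerivAt (fun t _ => hG t)
      ((hgc.intervalIntegrable _ _))
  have habs : ∫ t in y..s, g t ≤ ∫ t in (0:ℝ)..L, |g t| := by
    calc ∫ t in y..s, g t ≤ |∫ t in y..s, g t| := le_abs_self _
      _ ≤ |∫ t in y..s, abs (g t)| := by
          simpa [Real.norm_eq_abs] using
            intervalIntegral.norm_integral_le_abs_integral_norm (μ := volume) (f := g) (a := y)
              (b := s)
      _ ≤ |∫ t in (0:ℝ)..L, abs (g t)| := by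
          apply intervalIntegral.abs_integral_mono_interval
          · intro x hx
            rw [Set.uIoc_of_le hL.le]
            rcases Set.mem_uIoc.mp hx with h | h
            · exact ⟨lt_of_le_of_lt hy.1 h.1, le_trans h.2 hs.2⟩
            · exact ⟨lt_of_le_of_lt hs.1 h.1, le_trans h.2 hy.2⟩
          · filter_upwards with t using abs_nonneg _
          · exact (hgc.abs.intervalIntegrable _ _)
      _ = ∫ t in (0:ℝ)..L, |g t| :=
          abs_of_nonneg (intervalIntegral.integral_nonneg hL.le fun t _ => abs_nonneg _)
  have h5 : ∫ t in (0:ℝ)..L, |g t| ≤ 2 * ∫ t in (0:ℝ)..L, ‖F t‖ * ‖F' t‖ := by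
    rw [← intervalIntegral.integral_const_mul]
    exact intervalIntegral.integral_mono_on hL.le (hgc.abs.intervalIntegrable _ _)
      ((continuous_const.mul ((hFc.norm).mul (hF'c.norm))).intervalIntegrable _ _)
      (fun t _ => hg_bound t)
  have h6 : G y ≤ 1 / L * ∫ t in (0:ℝ)..L, G t := by
    rw [one_div, inv_mul_eq_div, le_div_iff₀ hL]
    linarith
  have : ‖F s‖ ^ 2 = G s := rfl
  linarith

lemma my_cont_memℒp {L : ℝ} [Fact (0 < L)] {E : Type*} [NormedAddCommGroup E]
    {h : AddCircle L → E} (hc : Continuous h) : MemLp h 2 volume :=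
  hc.memLp_of_hasCompactSupport (HasCompactSupport.of_compactSpace h)

end Aux

set_option maxHeartbeats 1000000

/-- lower bound for the functional `φ̂`: there is `c > 0` depending only on
`L` such that for every twice continuously differentiable `w`, every `f, v ∈ L²`, every
`μ ≥ 0`, and all `R₀, R₁ > 0` with `‖w‖ ≤ R₀` and `‖w‖_{H¹} ≤ R₁`:
`‖w_xx‖² - 2∫|w|²|w_x|² - Re ∫ w²(conj w_x)² - 2 Re ∫ f conj(w_xx) + 2μ Im ∫ v conj(w_xx)
  ≥ (1/2)‖w_xx‖² - c(R₀R₁³ + ‖f‖² + μ²‖v‖²)`. -/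
theorem varphi_lower_bound (L : ℝ) [Fact (0 < L)] :
    ∃ c : ℝ, 0 < c ∧ ∀ (w w' w'' : AddCircle L → ℂ),
      (∀ t : ℝ, HasDerivAt (fun τ : ℝ => w (τ : AddCircle L)) (w' (t : AddCircle L)) t) →
      (∀ t : ℝ, HasDerivAt (fun τ : ℝ => w' (τ : AddCircle L)) (w'' (t : AddCircle L)) t) →
      Continuous w'' →
      ∀ (f v : AddCircle L → ℂ), MemLp f 2 → MemLp v 2 →
      ∀ (μ R₀ R₁ : ℝ), 0 ≤ μ → 0 < R₀ → 0 < R₁ →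
      l2norm L w ≤ R₀ → Real.sqrt ((l2norm L w) ^ 2 + (l2norm L w') ^ 2) ≤ R₁ →
      (l2norm L w'') ^ 2 - 2 * (∫ x : AddCircle L, ‖w x‖ ^ 2 * ‖w' x‖ ^ 2)
          - (∫ x : AddCircle L, (w x) ^ 2 * ((starRingEnd ℂ) (w' x)) ^ 2).re
          - 2 * (∫ x : AddCircle L, f x * (starRingEnd ℂ) (w'' x)).re
          + 2 * μ * (∫ x : AddCircle L, v x * (starRingEnd ℂ) (w'' x)).im
        ≥ (1 / 2) * (l2norm L w'') ^ 2
          - c * (R₀ * R₁ ^ 3 + (l2norm L f) ^ 2 + μ ^ 2 * (l2norm L v) ^ 2) := by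
  have hL : 0 < L := Fact.out
  refine ⟨3 * (1 / L) + 10, by positivity, ?_⟩
  intro w w' w'' hw hw' hw''c f v hf hv μ R₀ R₁ hμ hR₀ hR₁ hwR₀ hwR₁
  have key : ∀ (h : AddCircle L → ℝ),
      ∫ t in (0:ℝ)..L, h (t : AddCircle L) = ∫ x : AddCircle L, h x := fun h => by
    simpa using AddCircle.intervalIntegral_preimage L 0 h
  have hFc : Continuous fun t : ℝ => w (t : AddCircle L) :=
    continuous_iff_continuousAt.mpr fun t => (hw t).continuousAt
  have hF'c : Continuous fun t : ℝ => w' (t : AddCircle L) :=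
    continuous_iff_continuousAt.mpr fun t => (hw' t).continuousAt
  have hwc : Continuous w := (QuotientAddGroup.isQuotientMap_mk _).continuous_iff.mpr hFc
  have hw'c : Continuous w' := (QuotientAddGroup.isQuotientMap_mk _).continuous_iff.mpr hF'c
  set a := l2norm L w with hadef
  set b := l2norm L w' with hbdef
  set A := l2norm L w'' with hAdef
  set Nf := l2norm L f with hNfdef
  set Nv := l2norm L v with hNvdef
  have a0 : 0 ≤ a := Real.sqrt_nonneg _
  have b0 : 0 ≤ b := Real.sqrt_nonneg _
  have A0 : 0 ≤ A := Real.sqrt_nonneg _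
  have Nf0 : 0 ≤ Nf := Real.sqrt_nonneg _
  have Nv0 : 0 ≤ Nv := Real.sqrt_nonneg _
  have ha2 : a ^ 2 = ∫ x : AddCircle L, ‖w x‖ ^ 2 :=
    Real.sq_sqrt (integral_nonneg fun x => sq_nonneg _)
  have hb2 : b ^ 2 = ∫ x : AddCircle L, ‖w' x‖ ^ 2 :=
    Real.sq_sqrt (integral_nonneg fun x => sq_nonneg _)
  have haR₁ : a ≤ R₁ := by
    calc a = Real.sqrt (a ^ 2) := (Real.sqrt_sq a0).symm
      _ ≤ Real.sqrt (a ^ 2 + b ^ 2) := Real.sqrt_le_sqrt (by linarith only [sq_nonneg b])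
      _ ≤ R₁ := hwR₁
  have hbR₁ : b ≤ R₁ := by
    calc b = Real.sqrt (b ^ 2) := (Real.sqrt_sq b0).symm
      _ ≤ Real.sqrt (a ^ 2 + b ^ 2) := Real.sqrt_le_sqrt (by linarith only [sq_nonneg a])
      _ ≤ R₁ := hwR₁
  -- the sup bound
  set M : ℝ := (1 / L) * a ^ 2 + 2 * (a * b) with hMdef
  have hab : a * b ≤ R₀ * R₁ := mul_le_mul hwR₀ hbR₁ b0 hR₀.le
  have haa : a ^ 2 ≤ R₀ * R₁ := by
    rw [sq]
    exact mul_le_mul hwR₀ haR₁ a0 hR₀.le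
  have hcsab : (∫ x : AddCircle L, ‖w x‖ * ‖w' x‖) ≤ a * b := by
    have hcs := my_cauchy_schwarz (𝕜 := ℝ) (fun x : AddCircle L => ‖w' x‖) (fun x => ‖w x‖)
      (my_cont_memℒp hw'c.norm) (my_cont_memℒp hwc.norm)
    simp only [starRingEnd_apply, star_trivial, norm_norm] at hcs
    rw [hadef, hbdef]
    unfold l2norm
    exact le_trans (le_abs_self _) (by rw [← Real.norm_eq_abs]; exact hcs)
  have hsup : ∀ s ∈ Set.Icc (0:ℝ) L, ‖w (s : AddCircle L)‖ ^ 2 ≤ M := by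
    intro s hs
    have h := my_agmon hL hw hF'c hs
    have e1 : (∫ t in (0:ℝ)..L, ‖w (t : AddCircle L)‖ ^ 2) = a ^ 2 :=
      (key (fun x => ‖w x‖ ^ 2)).trans ha2.symm
    have e2 : (∫ t in (0:ℝ)..L, ‖w (t : AddCircle L)‖ * ‖w' (t : AddCircle L)‖) ≤ a * b := by
      rw [key (fun x => ‖w x‖ * ‖w' x‖)]
      exact hcsab
    rw [e1] at h
    have h1L : 0 < 1 / L := by positivity
    calc ‖w (s : AddCircle L)‖ ^ 2
        ≤ 1 / L * a ^ 2 + 2 * ∫ t in (0:ℝ)..L, ‖w ↑t‖ * ‖w' ↑t‖ := h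
      _ ≤ M := by rw [hMdef]; linarith only [e2]
  -- bound on the quartic integral
  set I2 : ℝ := ∫ x : AddCircle L, ‖w x‖ ^ 2 * ‖w' x‖ ^ 2 with hI2def
  have hI2nonneg : 0 ≤ I2 := integral_nonneg fun x => by positivity
  have hI2 : I2 ≤ M * b ^ 2 := by
    rw [hI2def, ← key (fun x => ‖w x‖ ^ 2 * ‖w' x‖ ^ 2)]
    have hmono : (∫ t in (0:ℝ)..L, ‖w (t : AddCircle L)‖ ^ 2 * ‖w' (t : AddCircle L)‖ ^ 2)
        ≤ ∫ t in (0:ℝ)..L, M * ‖w' (t : AddCircle L)‖ ^ 2 := by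
      refine intervalIntegral.integral_mono_on hL.le ?_ ?_
        (fun t ht => mul_le_mul_of_nonneg_right (hsup t ht) (sq_nonneg _))
      · exact ((hFc.norm.pow 2).mul (hF'c.norm.pow 2)).intervalIntegrable _ _
      · exact (continuous_const.mul (hF'c.norm.pow 2)).intervalIntegrable _ _
    rw [intervalIntegral.integral_const_mul, key (fun x => ‖w' x‖ ^ 2), ← hb2] at hmono
    exact hmono
  -- bound on the re of the complex quartic integral
  have hI3 : |(∫ x : AddCircle L, (w x) ^ 2 * ((starRingEnd ℂ) (w' x)) ^ 2).re| ≤ I2 := by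
    refine le_trans (Complex.abs_re_le_norm _) ?_
    refine le_trans (norm_integral_le_integral_norm _) (le_of_eq ?_)
    rw [hI2def]
    congr 1
    ext x
    simp [norm_mul, norm_pow, RCLike.norm_conj]
  -- Cauchy-Schwarz bounds for f and v against w''
  have hw''2 : MemLp w'' 2 (volume : Measure (AddCircle L)) := my_cont_memℒp hw''c
  have hI4 : ‖∫ x : AddCircle L, f x * (starRingEnd ℂ) (w'' x)‖ ≤ A * Nf := by
    have h := my_cauchy_schwarz (𝕜 := ℂ) f w'' hf hw''2
    have e : (∫ x : AddCircle L, f x * (starRingEnd ℂ) (w'' x))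
        = ∫ x : AddCircle L, (starRingEnd ℂ) (w'' x) * f x := by
      congr 1; ext x; ring
    rw [e, hAdef, hNfdef]
    unfold l2norm
    exact h
  have hI5 : ‖∫ x : AddCircle L, v x * (starRingEnd ℂ) (w'' x)‖ ≤ A * Nv := by
    have h := my_cauchy_schwarz (𝕜 := ℂ) v w'' hv hw''2
    have e : (∫ x : AddCircle L, v x * (starRingEnd ℂ) (w'' x))
        = ∫ x : AddCircle L, (starRingEnd ℂ) (w'' x) * v x := by
      congr 1; ext x; ring
    rw [e, hAdef, hNvdef]
    unfold l2norm
    exact h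
  have hr4 : |(∫ x : AddCircle L, f x * (starRingEnd ℂ) (w'' x)).re| ≤ A * Nf :=
    le_trans (Complex.abs_re_le_norm _) (by exact hI4)
  have hi5 : |(∫ x : AddCircle L, v x * (starRingEnd ℂ) (w'' x)).im| ≤ A * Nv :=
    le_trans (Complex.abs_im_le_norm _) (by exact hI5)
  set r3 := (∫ x : AddCircle L, (w x) ^ 2 * ((starRingEnd ℂ) (w' x)) ^ 2).re
  set r4 := (∫ x : AddCircle L, f x * (starRingEnd ℂ) (w'' x)).re
  set i5 := (∫ x : AddCircle L, v x * (starRingEnd ℂ) (w'' x)).im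
  -- numerical assembly
  have h1L : 0 < 1 / L := by positivity
  have hM1 : M ≤ ((1 / L) + 2) * (R₀ * R₁) := by
    rw [hMdef]
    have h := mul_le_mul_of_nonneg_left haa h1L.le
    linarith only [h, hab]
  have hb2R : b ^ 2 ≤ R₁ ^ 2 := pow_le_pow_left₀ b0 hbR₁ 2
  have hM0 : 0 ≤ M := by
    rw [hMdef]
    have : 0 ≤ a * b := mul_nonneg a0 b0
    positivity
  have hMb : M * b ^ 2 ≤ ((1 / L) + 2) * (R₀ * R₁ ^ 3) := by
    calc M * b ^ 2 ≤ (((1 / L) + 2) * (R₀ * R₁)) * R₁ ^ 2 :=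
        mul_le_mul hM1 hb2R (sq_nonneg _) (by positivity)
      _ = ((1 / L) + 2) * (R₀ * R₁ ^ 3) := by ring
  have e4 : 2 * (A * Nf) ≤ A ^ 2 / 4 + 4 * Nf ^ 2 := by linarith only [sq_nonneg (A / 2 - 2 * Nf)]
  have e5 : 2 * μ * (A * Nv) ≤ A ^ 2 / 4 + 4 * (μ ^ 2 * Nv ^ 2) := by
    linarith only [sq_nonneg (A / 2 - 2 * (μ * Nv))]
  have hr4' : r4 ≤ A * Nf := le_of_abs_le hr4
  have hi5' : -(A * Nv) ≤ i5 := neg_le_of_abs_le hi5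
  have hi5'' : -(2 * μ * (A * Nv)) ≤ 2 * μ * i5 := by
    have h := mul_nonneg hμ (by linarith only [hi5'] : (0:ℝ) ≤ i5 + A * Nv)
    linarith only [h]
  have hr3' : r3 ≤ I2 := le_of_abs_le hI3
  have hRR : 0 < R₀ * R₁ ^ 3 := by positivity
  have hc1 : 3 * ((1 / L) + 2) * (R₀ * R₁ ^ 3) ≤ (3 * (1 / L) + 10) * (R₀ * R₁ ^ 3) :=
    mul_le_mul_of_nonneg_right (by linarith only) hRR.le
  have hc2 : 4 * Nf ^ 2 ≤ (3 * (1 / L) + 10) * Nf ^ 2 :=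
    mul_le_mul_of_nonneg_right (by linarith only [h1L]) (sq_nonneg Nf)
  have hc3 : 4 * (μ ^ 2 * Nv ^ 2) ≤ (3 * (1 / L) + 10) * (μ ^ 2 * Nv ^ 2) :=
    mul_le_mul_of_nonneg_right (by linarith only [h1L]) (mul_nonneg (sq_nonneg μ) (sq_nonneg Nv))
  clear_value a b A Nf Nv M I2 r3 r4 i5
  linarith only [hI2, hMb, hr3', hr4', hi5'', e4, e5, hc1, hc2, hc3, hI2nonneg]
end
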